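/- Let (f, φ) be L-smooth adaptable on an open convex set C, where φ is strictly convex and satisfies D_φ((1−γ)x + γv, x) ≤ γ^{1+ν} D_φ(v, x) for some ν > 0 and all γ ∈ [0,1]. Then for x, v ∈ C and γ ∈ [0,1], setting x₊ = (1−γ)x + γv, it holds that f(x) − f(x₊) ≥ γ⟨∇f(x), x − v⟩ − L γ^{1+ν} D_φ(v, x). -/

import Mathlib

open Set
open scoped RealInnerProductSpace

noncomputable def bregman {n : ℕ} (φ : EuclideanSpace ℝ (Fin n) → ℝ)
    (φ' : EuclideanSpace ℝ (Fin n) → EuclideanSpace ℝ (Fin n))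
    (x y : EuclideanSpace ℝ (Fin n)) : ℝ :=
  φ x - φ y - ⟪φ' y, x - y⟫

lemma convex_first_order {n : ℕ} {C : Set (EuclideanSpace ℝ (Fin n))}
    (hCconv : Convex ℝ C) {g : EuclideanSpace ℝ (Fin n) → ℝ}
    {g' x : EuclideanSpace ℝ (Fin n)} (hx : x ∈ C)
    (hconv : ConvexOn ℝ C g) (hg : HasGradientAt g g' x)
    {y : EuclideanSpace ℝ (Fin n)} (hy : y ∈ C) :
    ⟪g', y - x⟫ ≤ g y - g x := by
  set h : ℝ → ℝ := fun t => g (x + t • (y - x)) with hh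
  have hline : HasDerivAt (fun t : ℝ => x + t • (y - x)) (y - x) (0 : ℝ) := by
    simpa using ((hasDerivAt_id (0:ℝ)).smul_const (y - x)).const_add x
  have hfd : HasFDerivAt g (InnerProductSpace.toDual ℝ _ g') x :=
    hasGradientAt_iff_hasFDerivAt.mp hg
  have hfd0 : HasFDerivAt g (InnerProductSpace.toDual ℝ _ g') (x + (0:ℝ) • (y - x)) := by
    simpa using hfd
  have hd : HasDerivAt h (⟪g', y - x⟫) 0 := by
    have := hfd0.comp_hasDerivAt (0:ℝ) hline
    simp only [InnerProductSpace.toDual_apply_apply] at this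
    exact this
  have hslope : Filter.Tendsto (slope h 0) (nhdsWithin 0 (Ioi (0:ℝ))) (nhds ⟪g', y - x⟫) :=
    (hasDerivAt_iff_tendsto_slope.mp hd).mono_left
      (nhdsWithin_mono _ (fun t ht => ne_of_gt ht))
  refine le_of_tendsto hslope ?_
  filter_upwards [Ioo_mem_nhdsGT_of_mem (by simp : (0:ℝ) ∈ Ico (0:ℝ) 1)] with t ht
  have ht0 : 0 < t := ht.1
  have ht1 : t < 1 := ht.2
  have key : g (x + t • (y - x)) ≤ (1 - t) * g x + t * g y := by
    have := hconv.2 hx hy (by linarith : (0:ℝ) ≤ 1 - t) ht0.le (by ring)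
    have heq : (1 - t) • x + t • y = x + t • (y - x) := by
      module
    simpa [heq] using this
  have : h t - h 0 ≤ t * (g y - g x) := by
    simp only [hh]
    simp only [zero_smul, add_zero]
    nlinarith
  rw [slope_def_field, sub_zero, div_le_iff₀ ht0]
  linarith [this]

theorem primal_progress_smad {n : ℕ}
    (C : Set (EuclideanSpace ℝ (Fin n))) (hC : IsOpen C) (hCconv : Convex ℝ C)
    (φ f : EuclideanSpace ℝ (Fin n) → ℝ)
    (φ' f' : EuclideanSpace ℝ (Fin n) → EuclideanSpace ℝ (Fin n))
    (hφ : StrictConvexOn ℝ C φ)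
    (hφ' : ∀ x ∈ C, HasGradientAt φ (φ' x) x)
    (hf' : ∀ x ∈ C, HasGradientAt f (f' x) x)
    (L ν : ℝ) (hL : 0 < L) (hν : 0 < ν)
    (hsmad : ConvexOn ℝ C (fun x => L * φ x - f x) ∧
      ConvexOn ℝ C (fun x => L * φ x + f x))
    (hscale : ∀ x ∈ C, ∀ v ∈ C, ∀ γ ∈ Icc (0:ℝ) 1,
      bregman φ φ' ((1 - γ) • x + γ • v) x ≤ γ ^ (1 + ν) * bregman φ φ' v x) :
    ∀ x ∈ C, ∀ v ∈ C, ∀ γ ∈ Icc (0:ℝ) 1,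
      f x - f ((1 - γ) • x + γ • v) ≥
        γ * ⟪f' x, x - v⟫ - L * γ ^ (1 + ν) * bregman φ φ' v x := by
  intro x hx v hv γ hγ
  set xp := (1 - γ) • x + γ • v with hxp
  have hxpC : xp ∈ C := hCconv hx hv (by linarith [hγ.2]) hγ.1 (by ring)
  -- gradient of g := L•φ - f at x
  have hFφ := hasGradientAt_iff_hasFDerivAt.mp (hφ' x hx)
  have hFf := hasGradientAt_iff_hasFDerivAt.mp (hf' x hx)
  have hg : HasGradientAt (fun z => L * φ z - f z) (L • φ' x - f' x) x := by
    rw [hasGradientAt_iff_hasFDerivAt]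
    have : HasFDerivAt (fun z => L * φ z - f z)
        (L • (InnerProductSpace.toDual ℝ _ (φ' x)) - InnerProductSpace.toDual ℝ _ (f' x)) x :=
      (hFφ.const_mul L).sub hFf
    refine this.congr_fderiv ?_
    ext u
    simp [inner_sub_left, real_inner_smul_left]
  have hfo := convex_first_order hCconv hx hsmad.1 hg hxpC
  have h1 : ⟪L • φ' x - f' x, xp - x⟫ = L * ⟪φ' x, xp - x⟫ - ⟪f' x, xp - x⟫ := by
    simp [inner_sub_left, real_inner_smul_left, Finset.mul_sum, mul_assoc]
  have hxpx : xp - x = γ • (v - x) := by rw [hxp]; module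
  have h2 : ⟪f' x, xp - x⟫ = γ * ⟪f' x, v - x⟫ := by
    rw [hxpx, real_inner_smul_right]
  have h3 : ⟪f' x, x - v⟫ = -⟪f' x, v - x⟫ := by
    simp [inner_sub_right]
  have hbr : bregman φ φ' xp x = φ xp - φ x - ⟪φ' x, xp - x⟫ := rfl
  have hsc := hscale x hx v hv γ hγ
  have hsc' : L * bregman φ φ' xp x ≤ L * (γ ^ (1 + ν) * bregman φ φ' v x) :=
    mul_le_mul_of_nonneg_left (by simpa [hxp] using hsc) hL.le
  rw [h1, h2] at hfo
  rw [ge_iff_le, h3]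
  nlinarith [hfo, hsc', hbr]
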